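/- For X ~ McN(a,b,c,0,1), E[ log(1 - Φ(X)^c) ] = -(1/B(a,b)) Σ_{n=1}^∞ B(n+a, b)/n. -/

import Mathlib

open Real MeasureTheory

noncomputable def betaFn (a b : ℝ) : ℝ := ∫ t in (0:ℝ)..1, t ^ (a-1) * (1-t) ^ (b-1)

noncomputable def gaussPdf (x : ℝ) : ℝ := (Real.sqrt (2 * Real.pi))⁻¹ * Real.exp (-x^2/2)

noncomputable def stdNormCdf (x : ℝ) : ℝ := ∫ t in Set.Iic x, gaussPdf t

noncomputable def mcNStdPdf (a b c x : ℝ) : ℝ :=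
  (c / betaFn a b) * gaussPdf x * stdNormCdf x ^ (a*c - 1) * (1 - stdNormCdf x ^ c) ^ (b - 1)

open Set Filter

lemma gaussPdf_pos (x : ℝ) : 0 < gaussPdf x := by
  unfold gaussPdf
  positivity

lemma gaussPdf_continuous : Continuous gaussPdf := by
  unfold gaussPdf
  fun_prop

lemma gaussPdf_eq (x : ℝ) : gaussPdf x = (Real.sqrt (2 * Real.pi))⁻¹ * Real.exp (-(1/2) * x^2) := by
  unfold gaussPdf; ring_nf

lemma gaussPdf_integrable : Integrable gaussPdf := by
  have : Integrable (fun x : ℝ => Real.exp (-(1/2) * x^2)) := integrable_exp_neg_mul_sq (by norm_num)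
  have h := this.const_mul ((Real.sqrt (2 * Real.pi))⁻¹)
  exact h.congr (by filter_upwards with x using (gaussPdf_eq x).symm)

lemma gaussPdf_integral : ∫ x : ℝ, gaussPdf x = 1 := by
  have h : ∫ x : ℝ, Real.exp (-(1/2) * x^2) = Real.sqrt (Real.pi / (1/2)) :=
    integral_gaussian (1/2)
  have : ∫ x : ℝ, gaussPdf x = (Real.sqrt (2 * Real.pi))⁻¹ * Real.sqrt (Real.pi / (1/2)) := by
    rw [← h, ← integral_const_mul]
    exact integral_congr_ae (by filter_upwards with x using gaussPdf_eq x)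
  rw [this]
  rw [show Real.pi / (1/2) = 2 * Real.pi by ring]
  exact inv_mul_cancel₀ (by positivity)

lemma stdNormCdf_eq (x : ℝ) : stdNormCdf x = stdNormCdf 0 + ∫ t in (0:ℝ)..x, gaussPdf t := by
  unfold stdNormCdf
  rw [← intervalIntegral.integral_Iic_sub_Iic (gaussPdf_integrable.integrableOn)
    (gaussPdf_integrable.integrableOn)]
  ring

lemma stdNormCdf_hasDerivAt (x : ℝ) : HasDerivAt stdNormCdf (gaussPdf x) x := by
  have h : HasDerivAt (fun y => ∫ t in (0:ℝ)..y, gaussPdf t) (gaussPdf x) x :=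
    intervalIntegral.integral_hasDerivAt_right
      (gaussPdf_integrable.intervalIntegrable)
      (gaussPdf_continuous.stronglyMeasurableAtFilter _ _)
      gaussPdf_continuous.continuousAt
  have := h.const_add (stdNormCdf 0)
  exact this.congr_of_eventuallyEq (by filter_upwards with y using (stdNormCdf_eq y))

lemma stdNormCdf_strictMono : StrictMono stdNormCdf := by
  apply strictMono_of_deriv_pos
  intro x
  rw [(stdNormCdf_hasDerivAt x).deriv]
  exact gaussPdf_pos x

lemma stdNormCdf_continuous : Continuous stdNormCdf :=
  continuous_iff_continuousAt.2 fun x => (stdNormCdf_hasDerivAt x).continuousAt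

lemma stdNormCdf_nonneg (x : ℝ) : 0 ≤ stdNormCdf x :=
  setIntegral_nonneg measurableSet_Iic fun t _ => (gaussPdf_pos t).le

lemma stdNormCdf_pos (x : ℝ) : 0 < stdNormCdf x :=
  lt_of_le_of_lt (stdNormCdf_nonneg (x - 1)) (stdNormCdf_strictMono (by linarith))

lemma stdNormCdf_le_one (x : ℝ) : stdNormCdf x ≤ 1 := by
  rw [← gaussPdf_integral]
  exact setIntegral_le_integral gaussPdf_integrable
    (by filter_upwards with t using (gaussPdf_pos t).le)

lemma stdNormCdf_lt_one (x : ℝ) : stdNormCdf x < 1 :=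
  lt_of_lt_of_le (stdNormCdf_strictMono (show x < x + 1 by linarith)) (stdNormCdf_le_one (x + 1))

lemma stdNormCdf_tendsto_atTop : Tendsto stdNormCdf atTop (nhds 1) := by
  rw [← gaussPdf_integral]
  exact (MeasureTheory.aecover_Iic (tendsto_id (α := ℝ))).integral_tendsto_of_countably_generated
    gaussPdf_integrable

lemma stdNormCdf_tendsto_atBot : Tendsto stdNormCdf atBot (nhds 0) := by
  have hIoi : Tendsto (fun x : ℝ => ∫ t in Set.Ioi x, gaussPdf t) atBot (nhds 1) := by
    rw [← gaussPdf_integral]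
    exact (MeasureTheory.aecover_Ioi (tendsto_id (α := ℝ))).integral_tendsto_of_countably_generated
      gaussPdf_integrable
  have heq : ∀ x : ℝ, stdNormCdf x = 1 - ∫ t in Set.Ioi x, gaussPdf t := by
    intro x
    have := intervalIntegral.integral_Iic_add_Ioi (b := x) (f := gaussPdf)
      gaussPdf_integrable.integrableOn gaussPdf_integrable.integrableOn
    rw [gaussPdf_integral] at this
    unfold stdNormCdf; linarith
  have h2 := (tendsto_const_nhds (x := (1:ℝ)) (f := atBot)).sub hIoi
  rw [sub_self] at h2
  exact h2.congr fun x => (heq x).symm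

lemma stdNormCdf_range : Set.range stdNormCdf = Set.Ioo 0 1 := by
  apply Set.eq_of_subset_of_subset
  · rintro y ⟨x, rfl⟩
    exact ⟨stdNormCdf_pos x, stdNormCdf_lt_one x⟩
  · rintro y ⟨hy0, hy1⟩
    obtain ⟨lo, hlo⟩ : ∃ lo, stdNormCdf lo < y := by
      have := stdNormCdf_tendsto_atBot.eventually_lt_const hy0
      exact this.exists
    obtain ⟨hi, hhi⟩ : ∃ hi, y < stdNormCdf hi := by
      have := stdNormCdf_tendsto_atTop.eventually_const_lt hy1
      exact this.exists
    have hle : lo ≤ hi := by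
      by_contra h
      exact absurd (stdNormCdf_strictMono (lt_of_not_ge h)) (by linarith)
    obtain ⟨x, _, hx⟩ := intermediate_value_Icc hle stdNormCdf_continuous.continuousOn
      ⟨hlo.le, hhi.le⟩
    exact ⟨x, hx⟩

lemma cov1 (g : ℝ → ℝ) :
    ∫ x : ℝ, gaussPdf x * g (stdNormCdf x) = ∫ t in Set.Ioo (0:ℝ) 1, g t := by
  have h := MeasureTheory.integral_image_eq_integral_abs_deriv_smul (s := Set.univ)
    (f := stdNormCdf) (f' := gaussPdf) MeasurableSet.univ
    (fun x _ => (stdNormCdf_hasDerivAt x).hasDerivWithinAt)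
    (stdNormCdf_strictMono.injective.injOn) g
  rw [Set.image_univ, stdNormCdf_range] at h
  rw [h, MeasureTheory.Measure.restrict_univ]
  congr 1
  funext x
  rw [abs_of_pos (gaussPdf_pos x), smul_eq_mul]

lemma cov2 {c : ℝ} (hc : 0 < c) (g : ℝ → ℝ) :
    ∫ t in Set.Ioo (0:ℝ) 1, |c * t ^ (c - 1)| * g (t ^ c) = ∫ u in Set.Ioo (0:ℝ) 1, g u := by
  have himg : (fun t : ℝ => t ^ c) '' Set.Ioo 0 1 = Set.Ioo (0:ℝ) 1 := by
    apply Set.eq_of_subset_of_subset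
    · rintro u ⟨t, ⟨ht0, ht1⟩, rfl⟩
      exact ⟨Real.rpow_pos_of_pos ht0 c, Real.rpow_lt_one ht0.le ht1 hc⟩
    · rintro u ⟨hu0, hu1⟩
      refine ⟨u ^ c⁻¹, ⟨Real.rpow_pos_of_pos hu0 _, Real.rpow_lt_one hu0.le hu1 (by positivity)⟩, ?_⟩
      simp only []
      rw [← Real.rpow_mul hu0.le, inv_mul_cancel₀ (ne_of_gt hc), Real.rpow_one]
  have h := MeasureTheory.integral_image_eq_integral_abs_deriv_smul (s := Set.Ioo (0:ℝ) 1)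
    (f := fun t => t ^ c) (f' := fun t => c * t ^ (c - 1)) measurableSet_Ioo
    (fun t ht => (Real.hasDerivAt_rpow_const (Or.inl (ne_of_gt ht.1))).hasDerivWithinAt)
    (fun t ht s hs hts => by
      have := Real.rpow_left_injOn (x := c) (ne_of_gt hc)
      exact this (by simpa using ht.1.le) (by simpa using hs.1.le) hts) g
  rw [himg] at h
  rw [h]
  simp [smul_eq_mul]

lemma betaIntegrand_intervalIntegrable {a b : ℝ} (ha : 0 < a) (hb : 0 < b) :
    IntervalIntegrable (fun t : ℝ => t ^ (a - 1) * (1 - t) ^ (b - 1)) volume 0 1 := by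
  have h1 : IntervalIntegrable (fun t : ℝ => t ^ (a - 1) * (1 - t) ^ (b - 1)) volume 0 (1/2) := by
    apply IntervalIntegrable.mul_continuousOn
    · exact intervalIntegral.intervalIntegrable_rpow' (by linarith)
    · apply ContinuousOn.rpow_const
      · fun_prop
      · intro t ht
        rw [Set.uIcc_of_le (by norm_num)] at ht
        left; simp only [ne_eq, sub_ne_zero]
        intro h; rw [← h] at ht; norm_num at ht
  have h2 : IntervalIntegrable (fun t : ℝ => t ^ (a - 1) * (1 - t) ^ (b - 1)) volume (1/2) 1 := by
    apply IntervalIntegrable.continuousOn_mul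
    · have base : IntervalIntegrable (fun t : ℝ => t ^ (b - 1)) volume 0 (1/2) :=
        intervalIntegral.intervalIntegrable_rpow' (by linarith)
      have := (base.comp_sub_left 1).symm
      norm_num at this
      exact this
    · apply ContinuousOn.rpow_const
      · fun_prop
      · intro t ht
        rw [Set.uIcc_of_le (by norm_num)] at ht
        left
        have : (0:ℝ) < t := lt_of_lt_of_le (by norm_num) ht.1
        exact ne_of_gt this
  exact h1.trans h2

lemma betaIntegrand_integrableOn {a b : ℝ} (ha : 0 < a) (hb : 0 < b) :
    IntegrableOn (fun t : ℝ => t ^ (a - 1) * (1 - t) ^ (b - 1)) (Set.Ioo 0 1) := by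
  exact ((betaIntegrand_intervalIntegrable ha hb).1).mono_set Set.Ioo_subset_Ioc_self

lemma logIntegrand_integrableOn {a b : ℝ} (ha : 0 < a) (hb : 0 < b) :
    IntegrableOn (fun u : ℝ => u ^ (a - 1) * (1 - u) ^ (b - 1) * (-Real.log (1 - u)))
      (Set.Ioo 0 1) := by
  have hmeas : AEStronglyMeasurable
      (fun u : ℝ => u ^ (a - 1) * (1 - u) ^ (b - 1) * (-Real.log (1 - u)))
      (volume.restrict (Set.Ioo 0 1)) := by
    apply ContinuousOn.aestronglyMeasurable _ measurableSet_Ioo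
    apply ContinuousOn.mul
    · apply ContinuousOn.mul
      · exact ContinuousOn.rpow_const continuousOn_id (fun u hu => Or.inl (ne_of_gt hu.1))
      · exact ContinuousOn.rpow_const (by fun_prop) (fun u hu => Or.inl (by
          simp only [ne_eq, sub_ne_zero]; exact fun h => absurd (h ▸ hu.2) (lt_irrefl _)))
    · exact ContinuousOn.neg (Real.continuousOn_log.comp (by fun_prop)
        (fun u hu => by simp only [Set.mem_compl_iff, Set.mem_singleton_iff]; intro h
                        rw [sub_eq_zero] at h; exact absurd (h ▸ hu.2) (lt_irrefl _)))
  have hg : IntegrableOn (fun u : ℝ => (2 / b) * (u ^ (a - 1) * (1 - u) ^ (b / 2 - 1)))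
      (Set.Ioo 0 1) := (betaIntegrand_integrableOn ha (by linarith)).const_mul _
  apply hg.mono' hmeas
  filter_upwards [MeasureTheory.ae_restrict_mem measurableSet_Ioo] with u hu
  obtain ⟨hu0, hu1⟩ := hu
  have h1u : 0 < 1 - u := by linarith
  have hlog0 : 0 ≤ -Real.log (1 - u) := by
    rw [neg_nonneg]
    exact Real.log_nonpos h1u.le (by linarith)
  have hbound : -Real.log (1 - u) ≤ (2 / b) * (1 - u) ^ (-(b / 2)) := by
    have := Real.log_le_rpow_div (x := (1 - u)⁻¹) (by positivity) (show 0 < b / 2 by linarith)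
    calc -Real.log (1 - u) = Real.log (1 - u)⁻¹ := by rw [Real.log_inv]
      _ ≤ (1 - u)⁻¹ ^ (b / 2) / (b / 2) := this
      _ = (2 / b) * (1 - u) ^ (-(b / 2)) := by
          rw [Real.inv_rpow h1u.le, ← Real.rpow_neg h1u.le]
          ring
  rw [Real.norm_eq_abs, abs_of_nonneg (by positivity)]
  calc u ^ (a - 1) * (1 - u) ^ (b - 1) * (-Real.log (1 - u))
      ≤ u ^ (a - 1) * (1 - u) ^ (b - 1) * ((2 / b) * (1 - u) ^ (-(b / 2))) := by
        apply mul_le_mul_of_nonneg_left hbound (by positivity)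
    _ = (2 / b) * (u ^ (a - 1) * (1 - u) ^ (b / 2 - 1)) := by
        have h2 : (1 - u) ^ (b - 1) * (1 - u) ^ (-(b / 2)) = (1 - u) ^ (b / 2 - 1) := by
          rw [← Real.rpow_add h1u]
          congr 1
          ring
        calc u ^ (a - 1) * (1 - u) ^ (b - 1) * ((2 / b) * (1 - u) ^ (-(b / 2)))
            = (2 / b) * (u ^ (a - 1) * ((1 - u) ^ (b - 1) * (1 - u) ^ (-(b / 2)))) := by ring
          _ = _ := by rw [h2]

lemma betaFn_eq_setIntegral (a b : ℝ) :
    betaFn a b = ∫ t in Set.Ioo (0:ℝ) 1, t ^ (a - 1) * (1 - t) ^ (b - 1) := by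
  rw [betaFn, intervalIntegral.integral_of_le (by norm_num),
    MeasureTheory.integral_Ioc_eq_integral_Ioo]

lemma F_integrableOn {a b : ℝ} (ha : 0 < a) (hb : 0 < b) (n : ℕ) :
    IntegrableOn (fun u : ℝ => u ^ ((n : ℝ) + a) * (1 - u) ^ (b - 1) / ((n : ℝ) + 1))
      (Set.Ioo 0 1) := by
  have h := (betaIntegrand_integrableOn (a := (n : ℝ) + 1 + a) (b := b) (by positivity) hb).div_const
    ((n : ℝ) + 1)
  simpa [IntegrableOn, show (n : ℝ) + 1 + a - 1 = (n : ℝ) + a from by ring] using h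

lemma F_integral {a b : ℝ} (ha : 0 < a) (hb : 0 < b) (n : ℕ) :
    ∫ u in Set.Ioo (0:ℝ) 1, u ^ ((n : ℝ) + a) * (1 - u) ^ (b - 1) / ((n : ℝ) + 1)
      = betaFn ((n : ℝ) + 1 + a) b / ((n : ℝ) + 1) := by
  rw [MeasureTheory.integral_div, betaFn_eq_setIntegral]
  congr 1
  simp only [show (n : ℝ) + 1 + a - 1 = (n : ℝ) + a from by ring]

lemma F_hasSum {a b : ℝ} {u : ℝ} (hu0 : 0 < u) (hu1 : u < 1) :
    HasSum (fun n : ℕ => u ^ ((n : ℝ) + a) * (1 - u) ^ (b - 1) / ((n : ℝ) + 1))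
      (u ^ (a - 1) * (1 - u) ^ (b - 1) * (-Real.log (1 - u))) := by
  have h := hasSum_pow_div_log_of_abs_lt_one (x := u) (by rw [abs_of_pos hu0]; exact hu1)
  have h2 := h.mul_left (u ^ (a - 1) * (1 - u) ^ (b - 1))
  have key : ∀ n : ℕ, u ^ (a - 1) * (1 - u) ^ (b - 1) * (u ^ (n + 1) / ((n : ℝ) + 1))
      = u ^ ((n : ℝ) + a) * (1 - u) ^ (b - 1) / ((n : ℝ) + 1) := by
    intro n
    have : u ^ ((n : ℝ) + a) = u ^ (a - 1) * u ^ (n + 1 : ℕ) := by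
      rw [← Real.rpow_natCast u (n + 1), ← Real.rpow_add hu0]
      congr 1
      push_cast
      ring
    rw [this]
    ring
  have h3 : (fun n : ℕ => u ^ (a - 1) * (1 - u) ^ (b - 1) * (u ^ (n + 1) / ((n : ℝ) + 1)))
      = fun n : ℕ => u ^ ((n : ℝ) + a) * (1 - u) ^ (b - 1) / ((n : ℝ) + 1) := funext key
  rw [h3] at h2
  exact h2

lemma F_aesm {a b : ℝ} (n : ℕ) :
    AEStronglyMeasurable (fun u : ℝ => u ^ ((n : ℝ) + a) * (1 - u) ^ (b - 1) / ((n : ℝ) + 1))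
      (volume.restrict (Set.Ioo 0 1)) := by
  apply Measurable.aestronglyMeasurable
  fun_prop

lemma series_step {a b : ℝ} (ha : 0 < a) (hb : 0 < b) :
    ∫ u in Set.Ioo (0:ℝ) 1, u ^ (a - 1) * (1 - u) ^ (b - 1) * Real.log (1 - u)
      = -∑' n : ℕ, betaFn ((n : ℝ) + 1 + a) b / ((n : ℝ) + 1) := by
  set μ := volume.restrict (Set.Ioo (0:ℝ) 1)
  set F : ℕ → ℝ → ℝ := fun n u => u ^ ((n : ℝ) + a) * (1 - u) ^ (b - 1) / ((n : ℝ) + 1) with hF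
  have hmem := MeasureTheory.ae_restrict_mem (μ := volume) (s := Set.Ioo (0:ℝ) 1) measurableSet_Ioo
  have hint : IntegrableOn (fun u : ℝ => u ^ (a - 1) * (1 - u) ^ (b - 1) * (-Real.log (1 - u)))
      (Set.Ioo 0 1) := logIntegrand_integrableOn ha hb
  -- the key lintegral finiteness
  have hfin : ∑' n : ℕ, ∫⁻ u, ‖F n u‖₊ ∂μ ≠ ⊤ := by
    rw [← MeasureTheory.lintegral_tsum (fun n => (F_aesm (a := a) (b := b) n).aemeasurable.nnnorm.coe_nnreal_ennreal)]
    have hbound : ∫⁻ u, ∑' n : ℕ, (‖F n u‖₊ : ENNReal) ∂μ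
        = ∫⁻ u, ENNReal.ofReal (u ^ (a - 1) * (1 - u) ^ (b - 1) * (-Real.log (1 - u))) ∂μ := by
      apply MeasureTheory.lintegral_congr_ae
      filter_upwards [hmem] with u hu
      obtain ⟨hu0, hu1⟩ := hu
      have hs := F_hasSum (a := a) (b := b) hu0 hu1
      have hnn : ∀ n : ℕ, 0 ≤ F n u := by
        intro n
        have h1u : (0:ℝ) < 1 - u := by linarith
        apply div_nonneg _ (by positivity)
        positivity
      rw [← hs.tsum_eq, ENNReal.ofReal_tsum_of_nonneg hnn hs.summable]
      congr 1
      funext n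
      rw [← Real.enorm_eq_ofReal (hnn n), enorm_eq_nnnorm]
    rw [hbound, ← MeasureTheory.ofReal_integral_eq_lintegral_ofReal hint]
    · exact ENNReal.ofReal_ne_top
    · filter_upwards [hmem] with u hu
      obtain ⟨hu0, hu1⟩ := hu
      have h1u : (0:ℝ) < 1 - u := by linarith
      have : 0 ≤ -Real.log (1 - u) := by
        rw [neg_nonneg]; exact Real.log_nonpos h1u.le (by linarith)
      positivity
  have hswap := MeasureTheory.integral_tsum (μ := μ) (f := F)
    (fun n => F_aesm (a := a) (b := b) n) hfin
  have hLHS : ∫ u, (∑' n : ℕ, F n u) ∂μ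
      = ∫ u in Set.Ioo (0:ℝ) 1, u ^ (a - 1) * (1 - u) ^ (b - 1) * (-Real.log (1 - u)) := by
    apply MeasureTheory.integral_congr_ae
    filter_upwards [hmem] with u hu
    exact (F_hasSum (a := a) (b := b) hu.1 hu.2).tsum_eq
  have hRHS : ∑' n : ℕ, ∫ u, F n u ∂μ = ∑' n : ℕ, betaFn ((n : ℝ) + 1 + a) b / ((n : ℝ) + 1) := by
    congr 1
    funext n
    exact F_integral ha hb n
  have : ∫ u in Set.Ioo (0:ℝ) 1, u ^ (a - 1) * (1 - u) ^ (b - 1) * (-Real.log (1 - u))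
      = ∑' n : ℕ, betaFn ((n : ℝ) + 1 + a) b / ((n : ℝ) + 1) := by
    rw [← hLHS, hswap, hRHS]
  rw [← neg_eq_iff_eq_neg]
  rw [← this, ← MeasureTheory.integral_neg]
  congr 1
  funext u
  ring

/-- E[log(1 - Φ(X)^c)] = -(1/B(a,b)) Σ_{n=1}^∞ B(n+a,b)/n. -/
theorem mcN_expectation_log_one_sub (a b c : ℝ) (ha : 0 < a) (hb : 0 < b) (hc : 0 < c) :
    ∫ x : ℝ, mcNStdPdf a b c x * Real.log (1 - stdNormCdf x ^ c)
      = -(1 / betaFn a b) * ∑' n : ℕ, betaFn (((n:ℝ) + 1) + a) b / ((n:ℝ) + 1) := by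
  set G : ℝ → ℝ := fun t =>
    (c / betaFn a b) * (t ^ (a * c - 1) * ((1 - t ^ c) ^ (b - 1) * Real.log (1 - t ^ c))) with hG
  set g₂ : ℝ → ℝ := fun u =>
    (betaFn a b)⁻¹ * (u ^ (a - 1) * ((1 - u) ^ (b - 1) * Real.log (1 - u))) with hg₂
  have step1 : ∫ x : ℝ, mcNStdPdf a b c x * Real.log (1 - stdNormCdf x ^ c)
      = ∫ x : ℝ, gaussPdf x * G (stdNormCdf x) := by
    apply MeasureTheory.integral_congr_ae
    filter_upwards with x
    unfold mcNStdPdf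
    simp only [hG]
    ring
  have step3 : ∫ t in Set.Ioo (0:ℝ) 1, G t
      = ∫ t in Set.Ioo (0:ℝ) 1, |c * t ^ (c - 1)| * g₂ (t ^ c) := by
    apply MeasureTheory.setIntegral_congr_fun measurableSet_Ioo
    intro t ht
    obtain ⟨ht0, ht1⟩ := ht
    have e1 : (t ^ c) ^ (a - 1) = t ^ (c * (a - 1)) := (Real.rpow_mul ht0.le _ _).symm
    have e2 : t ^ (c - 1) * t ^ (c * (a - 1)) = t ^ (a * c - 1) := by
      rw [← Real.rpow_add ht0]
      congr 1
      ring
    have hpos : 0 < c * t ^ (c - 1) := mul_pos hc (Real.rpow_pos_of_pos ht0 _)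
    simp only [hG, hg₂]
    rw [abs_of_pos hpos, e1, ← e2]
    ring
  have step5 : ∫ u in Set.Ioo (0:ℝ) 1, g₂ u
      = (betaFn a b)⁻¹ * ∫ u in Set.Ioo (0:ℝ) 1,
          u ^ (a - 1) * (1 - u) ^ (b - 1) * Real.log (1 - u) := by
    rw [← MeasureTheory.integral_const_mul]
    apply MeasureTheory.setIntegral_congr_fun measurableSet_Ioo
    intro u _
    simp only [hg₂]
    ring
  rw [step1, cov1 G, step3, cov2 hc g₂, step5, series_step ha hb]
  rw [one_div]
  ring
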